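/- Let m, n be positive integers and let p = 4mn + 1, q = 4mn - 2n + 1. For each j with 1 ≤ j ≤ 4mn, write j = 2mq' + r with 0 ≤ r ≤ 2m - 1. Then (-1)^{⌊jq/p⌋} = (-1)^{q'+r-1} if r ≥ 1, and (-1)^{⌊jq/p⌋} = (-1)^{q'} if r = 0. -/

import Mathlib

private lemma neg_one_pow_congr_nat (a b : ℕ) (h : a % 2 = b % 2) :
    (-1 : ℝ) ^ a = (-1 : ℝ) ^ b := by
  rcases Nat.even_or_odd a with ha | ha
  · have ha' := Nat.even_iff.mp ha
    rw [ha.neg_one_pow, (Nat.even_iff.mpr (by omega)).neg_one_pow]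
  · have ha' := Nat.odd_iff.mp ha
    rw [ha.neg_one_pow, (Nat.odd_iff.mpr (by omega)).neg_one_pow]

theorem epsilon_J2m_neg2n (m n : ℕ) (hm : 1 ≤ m) (hn : 1 ≤ n)
    (j : ℕ) (hj1 : 1 ≤ j) (hj2 : j ≤ 4 * m * n)
    (q' r : ℕ) (hjr : j = 2 * m * q' + r) (hr : r ≤ 2 * m - 1) :
    (1 ≤ r → (-1 : ℝ) ^ ((j * (4 * m * n - 2 * n + 1)) / (4 * m * n + 1)) =
        (-1 : ℝ) ^ ((q' : ℤ) + r - 1)) ∧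
    (r = 0 → (-1 : ℝ) ^ ((j * (4 * m * n - 2 * n + 1)) / (4 * m * n + 1)) =
        (-1 : ℝ) ^ q') := by
  have hp : 0 < 4 * m * n + 1 := Nat.succ_pos _
  have h2n : 2 * n ≤ 4 * m * n := by nlinarith
  have hQ2 : (4 * m * n - 2 * n + 1) + 2 * n = 4 * m * n + 1 := by
    rw [add_right_comm, Nat.sub_add_cancel h2n]
  have hq'le : q' ≤ 2 * n := by
    have h1 : 2 * m * q' ≤ 2 * m * (2 * n) := by nlinarith [hjr ▸ hj2]
    exact Nat.le_of_mul_le_mul_left h1 (by omega)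
  have hq'mul : q' ≤ 2 * m * q' := Nat.le_mul_of_pos_left q' (by omega)
  constructor
  · intro hr1
    -- r ≥ 1 case
    have hq'lt : q' < 2 * n := by
      have h1 : 2 * m * q' < 2 * m * (2 * n) := by nlinarith [hjr ▸ hj2]
      exact Nat.lt_of_mul_lt_mul_left h1
    obtain ⟨K, hK⟩ : ∃ K, j = q' + 1 + K := ⟨j - (q' + 1), by omega⟩
    obtain ⟨D, hD⟩ : ∃ D, 2 * n * r = q' + 1 + D := by
      refine ⟨2 * n * r - (q' + 1), ?_⟩
      have h1 : 2 * n * 1 ≤ 2 * n * r := Nat.mul_le_mul_left _ hr1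
      omega
    have hDle : 2 * n * r ≤ 4 * m * n := by
      have h1 : 2 * n * r ≤ 2 * n * (2 * m) := Nat.mul_le_mul_left _ (by omega)
      have h2 : 2 * n * (2 * m) = 4 * m * n := by ring
      omega
    obtain ⟨s, hs⟩ : ∃ s, s + (D + 1) = 4 * m * n + 1 := ⟨4 * m * n - D, by omega⟩
    have key : j * (4 * m * n - 2 * n + 1) = (4 * m * n + 1) * K + s := by
      zify
      zify at hQ2 hD hs hK hjr
      linear_combination (j : ℤ) * hQ2 + ((4:ℤ) * m * n + 1) * hK - hs - hD -
        2 * (n : ℤ) * hjr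
    have hdiv : (j * (4 * m * n - 2 * n + 1)) / (4 * m * n + 1) = K := by
      rw [key, Nat.mul_add_div hp, Nat.div_eq_of_lt (by omega), add_zero]
    rw [hdiv]
    have hE : (q' : ℤ) + r - 1 = ((q' + r - 1 : ℕ) : ℤ) := by omega
    rw [hE, zpow_natCast]
    apply neg_one_pow_congr_nat
    obtain ⟨A, hA⟩ : ∃ A, q' + 1 + K = 2 * A + r :=
      ⟨m * q', by rw [← hK, hjr]; ring⟩
    omega
  · intro hr0
    -- r = 0 case
    subst hr0
    have hq'1 : 1 ≤ q' := by
      rcases Nat.eq_zero_or_pos q' with h | h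
      · subst h; simp at hjr; omega
      · exact h
    obtain ⟨K, hK⟩ : ∃ K, j = q' + K := ⟨j - q', by omega⟩
    have key : j * (4 * m * n - 2 * n + 1) = (4 * m * n + 1) * K + q' := by
      zify
      zify at hQ2 hK hjr
      linear_combination (j : ℤ) * hQ2 + ((4:ℤ) * m * n + 1) * hK -
        2 * (n : ℤ) * hjr
    have hdiv : (j * (4 * m * n - 2 * n + 1)) / (4 * m * n + 1) = K := by
      rw [key, Nat.mul_add_div hp, Nat.div_eq_of_lt (by omega), add_zero]
    rw [hdiv]
    apply neg_one_pow_congr_nat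
    obtain ⟨A, hA⟩ : ∃ A, q' + K = 2 * A + 0 :=
      ⟨m * q', by rw [← hK, hjr]; ring⟩
    omega
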